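/- In a closed GS 2-manifold, counting folds by their α-limits equals counting them by their ω-limits, yielding the identity (W_{s_u} + W_r) + 2(D_{ss_u} + D_{sr} + D_r) + (6T_r + 4T_{ssr} + 2T_{ssa}) = (W_{s_s} + W_a) + 2(D_{ss_s} + D_{sa} + D_a) + (6T_a + 2T_{ssr} + 4T_{ssa}). -/
import Mathlib


open Finset

/-- The possible natures of GS singularities that are limits of folds. -/
inductive GSNature
  | Wa | Wss | Wsu | Wr
  | Da | Dsa | Dsss | Dssu | Dsr | Dr
  | Ta | Tssa | Tssr | Tr
  | other
  deriving DecidableEq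

open GSNature

/-- Number of folds having a singularity of the given nature as α-limit. -/
def alphaFolds : GSNature → ℕ
  | Wsu => 1 | Wr => 1
  | Dssu => 2 | Dsr => 2 | Dr => 2
  | Tr => 6 | Tssr => 4 | Tssa => 2
  | _ => 0

/-- Number of folds having a singularity of the given nature as ω-limit. -/
def omegaFolds : GSNature → ℕ
  | Wss => 1 | Wa => 1
  | Dsss => 2 | Dsa => 2 | Da => 2
  | Ta => 6 | Tssr => 2 | Tssa => 4
  | _ => 0

instance : Fintype GSNature :=
  ⟨⟨[Wa, Wss, Wsu, Wr, Da, Dsa, Dsss, Dssu, Dsr, Dr, Ta, Tssa, Tssr, Tr, other], by decide⟩,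
   fun x => by cases x <;> decide⟩

lemma gsnature_sum_expand (g : GSNature → ℕ) :
    ∑ η : GSNature, g η =
      g Wa + g Wss + g Wsu + g Wr + g Da + g Dsa + g Dsss + g Dssu + g Dsr + g Dr
        + g Ta + g Tssa + g Tssr + g Tr + g other := by
  simp [Finset.sum, Fintype.elems, Finset.univ]
  ring

/-- In a closed GS 2-manifold every fold has an α-limit and an ω-limit among the
singularities, and each singularity is the α- (resp. ω-) limit of a number of folds
determined by its nature.  Counting the folds by α-limits and by ω-limits yields
`(W_{s_u} + W_r) + 2(D_{ss_u} + D_{sr} + D_r) + (6T_r + 4T_{ssr} + 2T_{ssa})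
 = (W_{s_s} + W_a) + 2(D_{ss_s} + D_{sa} + D_a) + (6T_a + 2T_{ssr} + 4T_{ssa})`. -/
theorem fold_counting_identity
    (Sing Fold : Type*) [Fintype Sing] [Fintype Fold] [DecidableEq Sing]
    (nature : Sing → GSNature) (α ω : Fold → Sing)
    (hα : ∀ s, (univ.filter (fun f => α f = s)).card = alphaFolds (nature s))
    (hω : ∀ s, (univ.filter (fun f => ω f = s)).card = omegaFolds (nature s))
    (cnt : GSNature → ℕ)
    (hcnt : ∀ η, cnt η = (univ.filter (fun s => nature s = η)).card) :
    (cnt Wsu + cnt Wr) + 2 * (cnt Dssu + cnt Dsr + cnt Dr)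
        + (6 * cnt Tr + 4 * cnt Tssr + 2 * cnt Tssa)
      = (cnt Wss + cnt Wa) + 2 * (cnt Dsss + cnt Dsa + cnt Da)
        + (6 * cnt Ta + 2 * cnt Tssr + 4 * cnt Tssa) := by
  -- Group the sum over singularities by nature.
  have hsum : ∀ g : GSNature → ℕ,
      ∑ s : Sing, g (nature s) = ∑ η : GSNature, g η * cnt η := by
    intro g
    calc ∑ s : Sing, g (nature s)
        = ∑ η : GSNature, ∑ s ∈ univ.filter (fun s => nature s = η), g (nature s) :=
          (Finset.sum_fiberwise_of_maps_to (fun s _ => mem_univ _) _).symm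
      _ = ∑ η : GSNature, g η * cnt η := by
          refine Finset.sum_congr rfl fun η _ => ?_
          rw [hcnt η, Finset.sum_congr rfl (fun s hs => ?_), Finset.sum_const, smul_eq_mul,
            Nat.mul_comm]
          rw [(Finset.mem_filter.mp hs).2]
  -- Counting folds by α-limits and by ω-limits gives the same total.
  have hα' : Fintype.card Fold = ∑ s : Sing, alphaFolds (nature s) := by
    rw [← Finset.card_univ,
      Finset.card_eq_sum_card_fiberwise (f := α) (fun f _ => mem_univ (α f))]
    exact Finset.sum_congr rfl fun s _ => hα s
  have hω' : Fintype.card Fold = ∑ s : Sing, omegaFolds (nature s) := by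
    rw [← Finset.card_univ,
      Finset.card_eq_sum_card_fiberwise (f := ω) (fun f _ => mem_univ (ω f))]
    exact Finset.sum_congr rfl fun s _ => hω s
  have key : ∑ η : GSNature, alphaFolds η * cnt η = ∑ η : GSNature, omegaFolds η * cnt η := by
    rw [← hsum, ← hsum, ← hα', ← hω']
  rw [gsnature_sum_expand, gsnature_sum_expand] at key
  simp only [alphaFolds, omegaFolds] at key
  omega
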